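/- Define h:[0,∞)→ℝ by h(x) = x for x ∈ [0,1) and h(x) = 2^{−k}x + 2^{k+1} − 2 for x ∈ [4^k, 4^{k+1}), k = 0,1,2,…, and define g:[0,1]→ℝ by g(x) = x·h(−log₂ x) for x ∈ (0,1] and g(0) = 0. Then: (i) h is concave, subadditive (h(x+y) ≤ h(x) + h(y)), nondecreasing, h(x) → ∞ as x → ∞ and h(x)/x → 0 as x → ∞; (ii) g is concave on [0,1] with g(0) = lim_{x→0⁺} g(x) = 0, g is subderivative (g(xy) ≤ x·g(y) + y·g(x) for all x,y ∈ [0,1]), lim_{x→0⁺} g(x)/η(x) = 0 where η(x) = −x log₂ x, and lim_{x→0⁺} g(x)/x = ∞. -/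

import Mathlib

open Filter Set

/-- The Iksanov–Rösler function: `h(x) = x` on `[0,1)` and
`h(x) = 2^{−k}·x + 2^{k+1} − 2` for `x ∈ [4^k, 4^{k+1})`, `k = 0,1,2,…`
(for `x ≥ 1` one has `k = ⌊log₄ x⌋`). -/
noncomputable def hIR : ℝ → ℝ := fun x =>
  if x < 1 then x
  else (2 : ℝ) ^ (-⌊Real.logb 4 x⌋) * x + (2 : ℝ) ^ (⌊Real.logb 4 x⌋ + 1) - 2

/-- `g(x) = x·h(−log₂ x)` for `x ∈ (0,1]`, `g(0) = 0`. -/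
noncomputable def gIR : ℝ → ℝ := fun x =>
  if x = 0 then 0 else x * hIR (-Real.logb 2 x)

/-- The Shannon function `η(x) = −x·log₂ x`. -/
noncomputable def shannonF : ℝ → ℝ := fun x => -(x * Real.logb 2 x)

noncomputable def aIR (k : ℕ) : ℝ → ℝ := fun x => x / 2 ^ k + 2 * 2 ^ k - 2

lemma four_pow_eq (k : ℕ) : (4 : ℝ) ^ k = (2 ^ k) ^ 2 := by
  rw [show (4:ℝ) = 2 ^ 2 by norm_num, ← pow_mul, ← pow_mul, Nat.mul_comm]

lemma aIR_step_up {k : ℕ} {x : ℝ} (hx : x ≤ 4 ^ (k + 1)) : aIR k x ≤ aIR (k + 1) x := by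
  have hc : (0:ℝ) < 2 ^ k := by positivity
  have h4 : (4:ℝ) ^ (k+1) = 4 * (2 ^ k) ^ 2 := by rw [four_pow_eq, pow_succ]; ring
  rw [h4] at hx
  simp only [aIR, pow_succ]
  have ht : x / (2 ^ k * 2) ≤ 2 ^ k * 2 := (div_le_iff₀ (by positivity)).mpr (by nlinarith)
  have hx2 : x / 2 ^ k = 2 * (x / (2 ^ k * 2)) := by field_simp
  linarith

lemma aIR_step_down {k : ℕ} {x : ℝ} (hx : (4:ℝ) ^ (k + 1) ≤ x) : aIR (k + 1) x ≤ aIR k x := by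
  have hc : (0:ℝ) < 2 ^ k := by positivity
  have h4 : (4:ℝ) ^ (k+1) = 4 * (2 ^ k) ^ 2 := by rw [four_pow_eq, pow_succ]; ring
  rw [h4] at hx
  simp only [aIR, pow_succ]
  have ht : 2 ^ k * 2 ≤ x / (2 ^ k * 2) := (le_div_iff₀ (by positivity)).mpr (by nlinarith)
  have hx2 : x / 2 ^ k = 2 * (x / (2 ^ k * 2)) := by field_simp
  linarith

lemma aIR_mono_idx {k j : ℕ} (hkj : k ≤ j) {x : ℝ} (hx : x ≤ 4 ^ (k + 1)) :
    aIR k x ≤ aIR j x := by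
  induction j with
  | zero => have : k = 0 := Nat.le_zero.mp hkj; subst this; exact le_refl _
  | succ j ih =>
      rcases Nat.lt_or_ge k (j+1) with h | h
      · have hk : k ≤ j := Nat.lt_succ_iff.mp h
        refine le_trans (ih hk) (aIR_step_up ?_)
        calc x ≤ 4 ^ (k+1) := hx
          _ ≤ 4 ^ (j+1) := by
            apply pow_le_pow_right₀ (by norm_num) (by omega)
      · have : k = j+1 := le_antisymm hkj h
        subst this; exact le_refl _

lemma aIR_anti_idx {j k : ℕ} (hjk : j ≤ k) {x : ℝ} (hx : (4:ℝ) ^ k ≤ x) :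
    aIR k x ≤ aIR j x := by
  induction k with
  | zero => have : j = 0 := Nat.le_zero.mp hjk; subst this; exact le_refl _
  | succ k ih =>
      rcases Nat.lt_or_ge j (k+1) with h | h
      · have hj : j ≤ k := Nat.lt_succ_iff.mp h
        refine le_trans (aIR_step_down hx) (ih hj ?_)
        calc (4:ℝ) ^ k ≤ 4 ^ (k+1) := by
              apply pow_le_pow_right₀ (by norm_num) (by omega)
          _ ≤ x := hx
      · have : j = k+1 := le_antisymm hjk h
        subst this; exact le_refl _

lemma hIR_rep {x : ℝ} (hx : 0 ≤ x) :
    ∃ k : ℕ, hIR x = aIR k x ∧ x < 4 ^ (k + 1) ∧ (1 ≤ x → (4:ℝ) ^ k ≤ x) ∧ (x < 1 → k = 0) := by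
  by_cases h1 : x < 1
  · refine ⟨0, ?_, by norm_num; linarith, fun h => absurd h (not_le.mpr h1), fun _ => rfl⟩
    simp [hIR, aIR, if_pos h1]
  · push_neg at h1
    have hx0 : (0:ℝ) < x := lt_of_lt_of_le one_pos h1
    have hb : (1:ℝ) < 4 := by norm_num
    set L := ⌊Real.logb 4 x⌋ with hL
    have hL0 : 0 ≤ L := Int.floor_nonneg.mpr (Real.logb_nonneg hb h1)
    have hcast : (L.toNat : ℤ) = L := Int.toNat_of_nonneg hL0
    refine ⟨L.toNat, ?_, ?_, fun _ => ?_, fun h => absurd h (not_lt.mpr h1)⟩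
    · have e1 : (2:ℝ) ^ (-L) = ((2:ℝ) ^ L.toNat)⁻¹ := by
        conv_lhs => rw [← hcast]
        rw [zpow_neg, zpow_natCast]
      have e2 : (2:ℝ) ^ (L + 1) = (2:ℝ) ^ L.toNat * 2 := by
        rw [zpow_add_one₀ (two_ne_zero)]
        conv_lhs => rw [← hcast]
        rw [zpow_natCast]
      simp only [hIR, if_neg (not_lt.mpr h1), aIR, ← hL, e1, e2]
      rw [div_eq_inv_mul]
      ring
    · have hlt : Real.logb 4 x < (L : ℝ) + 1 := Int.lt_floor_add_one _
      have := (Real.logb_lt_iff_lt_rpow hb hx0).mp hlt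
      calc x < (4:ℝ) ^ ((L:ℝ) + 1) := this
        _ = 4 ^ (L.toNat + 1) := by
            have hcastR : ((L.toNat : ℝ)) = (L : ℝ) := by exact_mod_cast hcast
            rw [← Real.rpow_natCast (4:ℝ) (L.toNat + 1)]
            congr 1
            push_cast
            rw [hcastR]
    · have hle : (L : ℝ) ≤ Real.logb 4 x := Int.floor_le _
      have := (Real.le_logb_iff_rpow_le hb hx0).mp hle
      calc (4:ℝ) ^ L.toNat = (4:ℝ) ^ ((L:ℝ)) := by
            have hcastR : ((L.toNat : ℝ)) = (L : ℝ) := by exact_mod_cast hcast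
            rw [← Real.rpow_natCast (4:ℝ) L.toNat, hcastR]
        _ ≤ x := this

lemma hIR_le_aIR (j : ℕ) {x : ℝ} (hx : 0 ≤ x) : hIR x ≤ aIR j x := by
  obtain ⟨k, hk, hup, hlow, hzero⟩ := hIR_rep hx
  rw [hk]
  rcases le_total k j with h | h
  · exact aIR_mono_idx h hup.le
  · by_cases h1 : 1 ≤ x
    · exact aIR_anti_idx h (hlow h1)
    · have : k = 0 := hzero (not_le.mp h1)
      subst this
      have : j = 0 := Nat.le_zero.mp h
      subst this
      exact le_refl _

lemma aIR_affine (k : ℕ) {a b x y : ℝ} (hab : a + b = 1) :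
    a * aIR k x + b * aIR k y = aIR k (a * x + b * y) := by
  simp only [aIR]
  field_simp
  linear_combination (2 * 2 ^ k * 2 ^ k - 2 ^ k * 2) * hab

lemma hIR_concave : ConcaveOn ℝ (Set.Ici 0) hIR := by
  refine ⟨convex_Ici 0, ?_⟩
  intro x hx y hy a b ha hb hab
  have hz : (0:ℝ) ≤ a * x + b * y :=
    add_nonneg (mul_nonneg ha hx) (mul_nonneg hb hy)
  obtain ⟨k, hk, -, -, -⟩ := hIR_rep hz
  simp only [smul_eq_mul]
  calc a * hIR x + b * hIR y
      ≤ a * aIR k x + b * aIR k y := by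
        gcongr
        · exact hIR_le_aIR k hx
        · exact hIR_le_aIR k hy
    _ = aIR k (a * x + b * y) := aIR_affine k hab
    _ = hIR (a * x + b * y) := hk.symm

lemma hIR_monotone : MonotoneOn hIR (Set.Ici 0) := by
  intro x hx y hy hxy
  obtain ⟨k, hk, -, -, -⟩ := hIR_rep (hy : (0:ℝ) ≤ y)
  calc hIR x ≤ aIR k x := hIR_le_aIR k hx
    _ ≤ aIR k y := by
        simp only [aIR]
        have : (0:ℝ) < 2 ^ k := by positivity
        gcongr
    _ = hIR y := hk.symm

lemma hIR_zero : hIR 0 = 0 := by simp [hIR]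

lemma hIR_nonneg {x : ℝ} (hx : 0 ≤ x) : 0 ≤ hIR x := by
  rw [← hIR_zero]
  exact hIR_monotone (le_refl (0:ℝ)) hx hx

lemma hIR_subadd (x y : ℝ) (hx : 0 ≤ x) (hy : 0 ≤ y) : hIR (x + y) ≤ hIR x + hIR y := by
  rcases eq_or_lt_of_le (add_nonneg hx hy) with h | hs
  · have hx0 : x = 0 := by linarith
    have hy0 : y = 0 := by linarith
    simp [hx0, hy0, hIR_zero]
  · set s := x + y with hsdef
    have key : ∀ t : ℝ, 0 ≤ t → t ≤ s → (t / s) * hIR s ≤ hIR t := by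
      intro t ht hts
      have h1 : (0:ℝ) ≤ t / s := div_nonneg ht hs.le
      have h2 : (0:ℝ) ≤ 1 - t / s := by
        have : t / s ≤ 1 := (div_le_one hs).mpr hts
        linarith
      have := hIR_concave.2 (mem_Ici.mpr hs.le) (mem_Ici.mpr (le_refl (0:ℝ))) h1 h2 (by ring)
      simp only [smul_eq_mul, mul_zero, add_zero, hIR_zero] at this
      rwa [div_mul_cancel₀ _ (ne_of_gt hs)] at this
    have k1 := key x hx (by linarith)
    have k2 := key y hy (by linarith)
    have hsum : x / s * hIR s + y / s * hIR s = hIR s := by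
      field_simp
      ring
    linarith

lemma hIR_sqrt_le {x : ℝ} (h1 : 1 ≤ x) : Real.sqrt x ≤ hIR x := by
  have hx0 : (0:ℝ) ≤ x := by linarith
  obtain ⟨k, hk, hup, hlow, -⟩ := hIR_rep hx0
  have h4k : (4:ℝ) ^ k ≤ x := hlow h1
  have h2kpos : (0:ℝ) < 2 ^ k := by positivity
  have h2k : (2:ℝ) ^ k ≤ Real.sqrt x := by
    rw [show ((4:ℝ) ^ k) = (2 ^ k) ^ 2 from four_pow_eq k] at h4k
    exact Real.le_sqrt' h2kpos |>.mpr h4k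
  have hsx : Real.sqrt x ≤ x / 2 ^ k := by
    rw [le_div_iff₀ h2kpos]
    calc Real.sqrt x * 2 ^ k ≤ Real.sqrt x * Real.sqrt x := by
          gcongr
      _ = x := Real.mul_self_sqrt hx0
  have hone : (1:ℝ) ≤ 2 ^ k := one_le_pow₀ (by norm_num)
  rw [hk]
  simp only [aIR]
  linarith

lemma hIR_tendsto_atTop : Tendsto hIR atTop atTop := by
  have hsqrt : Tendsto Real.sqrt atTop atTop := by
    refine (tendsto_rpow_atTop (by norm_num : (0:ℝ) < 1/2)).congr' ?_
    filter_upwards [eventually_ge_atTop (0:ℝ)] with x hx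
    rw [Real.sqrt_eq_rpow]
  refine tendsto_atTop_mono' atTop ?_ hsqrt
  filter_upwards [eventually_ge_atTop (1:ℝ)] with x hx
  exact hIR_sqrt_le hx

lemma hIR_div_le {x : ℝ} (h1 : 1 ≤ x) : hIR x / x ≤ 4 / Real.sqrt x := by
  have hx0 : (0:ℝ) < x := lt_of_lt_of_le one_pos h1
  obtain ⟨k, hk, hup, hlow, -⟩ := hIR_rep hx0.le
  have h4k : (4:ℝ) ^ k ≤ x := hlow h1
  have h2kpos : (0:ℝ) < 2 ^ k := by positivity
  have hsqpos : (0:ℝ) < Real.sqrt x := Real.sqrt_pos.mpr hx0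
  have hss : Real.sqrt x * Real.sqrt x = x := Real.mul_self_sqrt hx0.le
  have h2k : (2:ℝ) ^ k ≤ Real.sqrt x := by
    rw [show ((4:ℝ) ^ k) = (2 ^ k) ^ 2 from four_pow_eq k] at h4k
    exact Real.le_sqrt' h2kpos |>.mpr h4k
  have h2k' : Real.sqrt x < 2 ^ k * 2 := by
    have : x < (2 ^ k * 2) ^ 2 := by
      calc x < 4 ^ (k + 1) := hup
        _ = (2 ^ k * 2) ^ 2 := by rw [four_pow_eq]; ring
    nlinarith [hsqpos, hss]
  rw [hk]
  simp only [aIR]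
  rw [div_le_div_iff₀ hx0 hsqpos]
  -- (x / 2^k + 2*2^k - 2) * sqrt x ≤ 4 * x
  have e1 : x / 2 ^ k * Real.sqrt x ≤ 2 * x := by
    rw [div_mul_eq_mul_div, div_le_iff₀ h2kpos]
    nlinarith [hss, hsqpos.le, hx0.le]
  nlinarith [h2k, hsqpos.le, hss, hx0.le]

lemma hIR_div_tendsto_zero : Tendsto (fun x => hIR x / x) atTop (nhds 0) := by
  have hupper : Tendsto (fun x : ℝ => 4 / Real.sqrt x) atTop (nhds 0) := by
    apply Tendsto.div_atTop tendsto_const_nhds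
    refine (tendsto_rpow_atTop (by norm_num : (0:ℝ) < 1/2)).congr' ?_
    filter_upwards [eventually_ge_atTop (0:ℝ)] with x hx
    rw [Real.sqrt_eq_rpow]
  refine tendsto_of_tendsto_of_tendsto_of_le_of_le' tendsto_const_nhds hupper ?_ ?_
  · filter_upwards [eventually_ge_atTop (1:ℝ)] with x hx
    exact div_nonneg (hIR_nonneg (by linarith)) (by linarith)
  · filter_upwards [eventually_ge_atTop (1:ℝ)] with x hx
    exact hIR_div_le hx

lemma gIR_zero : gIR 0 = 0 := by simp [gIR]

lemma gIR_of_pos {x : ℝ} (hx : 0 < x) : gIR x = x * hIR (-Real.logb 2 x) :=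
  if_neg (ne_of_gt hx)

lemma neg_logb_nonneg {x : ℝ} (hx0 : 0 < x) (hx1 : x ≤ 1) : 0 ≤ -Real.logb 2 x :=
  neg_nonneg.mpr (Real.logb_nonpos one_lt_two hx0.le hx1)

lemma gIR_nonneg {x : ℝ} (hx0 : 0 ≤ x) (hx1 : x ≤ 1) : 0 ≤ gIR x := by
  rcases eq_or_lt_of_le hx0 with h | h
  · rw [← h, gIR_zero]
  · rw [gIR_of_pos h]
    exact mul_nonneg h.le (hIR_nonneg (neg_logb_nonneg h hx1))

lemma shannonF_concave : ConcaveOn ℝ (Set.Ici 0) shannonF := by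
  have h2 : (0:ℝ) ≤ (Real.log 2)⁻¹ := by positivity
  have := Real.concaveOn_negMulLog.smul h2
  convert this using 1
  · rfl
  · rfl
  funext x
  simp only [shannonF, Real.negMulLog, Real.logb, smul_eq_mul, Pi.smul_apply]
  field_simp

lemma shannonF_eq (x : ℝ) : shannonF x = x * (-Real.logb 2 x) := by
  simp only [shannonF]; ring

lemma gIR_superhomog {c z : ℝ} (hc0 : 0 ≤ c) (hc1 : c ≤ 1) (hz0 : 0 ≤ z) (hz1 : z ≤ 1) :
    c * gIR z ≤ gIR (c * z) := by
  rcases eq_or_lt_of_le hc0 with h | hc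
  · simp [← h, gIR_zero]
  rcases eq_or_lt_of_le hz0 with h | hz
  · simp [← h, gIR_zero]
  have hcz : 0 < c * z := mul_pos hc hz
  rw [gIR_of_pos hz, gIR_of_pos hcz]
  have hlog : Real.logb 2 (c * z) = Real.logb 2 c + Real.logb 2 z :=
    Real.logb_mul (ne_of_gt hc) (ne_of_gt hz)
  have h1 : -Real.logb 2 z ≤ -Real.logb 2 (c * z) := by
    have := Real.logb_nonpos one_lt_two hc.le hc1
    rw [hlog]; linarith
  have hmem1 : -Real.logb 2 z ∈ Set.Ici (0:ℝ) := neg_logb_nonneg hz hz1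
  have hmem2 : -Real.logb 2 (c * z) ∈ Set.Ici (0:ℝ) :=
    neg_logb_nonneg hcz (by nlinarith)
  have hh := hIR_monotone hmem1 hmem2 h1
  calc c * (z * hIR (-Real.logb 2 z)) = c * z * hIR (-Real.logb 2 z) := by ring
    _ ≤ c * z * hIR (-Real.logb 2 (c * z)) := by gcongr

lemma gIR_concave : ConcaveOn ℝ (Set.Icc 0 1) gIR := by
  refine ⟨convex_Icc 0 1, ?_⟩
  rintro x ⟨hx0, hx1⟩ y ⟨hy0, hy1⟩ a b ha hb hab
  simp only [smul_eq_mul]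
  rcases eq_or_lt_of_le hx0 with hx | hx
  · -- x = 0
    simp only [← hx, gIR_zero, mul_zero, zero_add]
    exact gIR_superhomog hb (by linarith) hy0 hy1
  rcases eq_or_lt_of_le hy0 with hy | hy
  · simp only [← hy, gIR_zero, mul_zero, add_zero]
    exact gIR_superhomog ha (by linarith) hx0 hx1
  -- main case : 0 < x, 0 < y
  set z := a * x + b * y with hzdef
  have hz : 0 < z := by
    rcases eq_or_lt_of_le ha with h | h
    · have hb1 : b = 1 := by linarith
      simp only [hzdef, ← h, hb1]; nlinarith
    · nlinarith
  have hz1 : z ≤ 1 := by nlinarith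
  rw [gIR_of_pos hx, gIR_of_pos hy, gIR_of_pos hz]
  set p := -Real.logb 2 x with hpdef
  set q := -Real.logb 2 y with hqdef
  have hp : p ∈ Set.Ici (0:ℝ) := neg_logb_nonneg hx hx1
  have hq : q ∈ Set.Ici (0:ℝ) := neg_logb_nonneg hy hy1
  -- eta inequality
  have heta : a * shannonF x + b * shannonF y ≤ shannonF z := by
    have := shannonF_concave.2 (mem_Ici.mpr hx0) (mem_Ici.mpr hy0) ha hb hab
    simpa only [smul_eq_mul] using this
  have hsx : shannonF x = x * p := shannonF_eq x
  have hsy : shannonF y = y * q := shannonF_eq y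
  have hsz : shannonF z = z * (-Real.logb 2 z) := shannonF_eq z
  -- weights
  have hc0 : 0 ≤ a * x / z := by positivity
  have hd0 : 0 ≤ b * y / z := div_nonneg (mul_nonneg hb hy0) hz.le
  have hcd : a * x / z + b * y / z = 1 := by
    field_simp
    exact hzdef.symm
  -- concavity of h
  have h3 := hIR_concave.2 hp hq hc0 hd0 hcd
  simp only [smul_eq_mul] at h3
  -- monotonicity step
  have harg0 : 0 ≤ a * x / z * p + b * y / z * q :=
    add_nonneg (mul_nonneg hc0 hp) (mul_nonneg hd0 hq)
  have hargle : a * x / z * p + b * y / z * q ≤ -Real.logb 2 z := by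
    have h4 : (a * x * p + b * y * q) / z ≤ shannonF z / z := by
      gcongr
      rw [hsx, hsy] at heta; linarith
    have h5 : shannonF z / z = -Real.logb 2 z := by
      rw [hsz]
      field_simp
    calc a * x / z * p + b * y / z * q = (a * x * p + b * y * q) / z := by ring
      _ ≤ shannonF z / z := h4
      _ = -Real.logb 2 z := h5
  have h5 : hIR (a * x / z * p + b * y / z * q) ≤ hIR (-Real.logb 2 z) :=
    hIR_monotone harg0 (le_trans harg0 hargle) hargle
  -- combine
  have h6 : a * x / z * hIR p + b * y / z * hIR q ≤ hIR (-Real.logb 2 z) :=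
    le_trans h3 h5
  have h7 : z * (a * x / z * hIR p + b * y / z * hIR q) ≤ z * hIR (-Real.logb 2 z) := by
    gcongr
  calc a * (x * hIR p) + b * (y * hIR q)
      = z * (a * x / z * hIR p + b * y / z * hIR q) := by
        field_simp
    _ ≤ z * hIR (-Real.logb 2 z) := h7

lemma gIR_subderiv : ∀ x ∈ Set.Icc (0:ℝ) 1, ∀ y ∈ Set.Icc (0:ℝ) 1,
    gIR (x * y) ≤ x * gIR y + y * gIR x := by
  rintro x ⟨hx0, hx1⟩ y ⟨hy0, hy1⟩
  rcases eq_or_lt_of_le hx0 with hx | hx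
  · rw [← hx]
    simp [gIR_zero]
  rcases eq_or_lt_of_le hy0 with hy | hy
  · rw [← hy]
    simp [gIR_zero]
  have hxy : 0 < x * y := mul_pos hx hy
  rw [gIR_of_pos hx, gIR_of_pos hy, gIR_of_pos hxy]
  have hlog : Real.logb 2 (x * y) = Real.logb 2 x + Real.logb 2 y :=
    Real.logb_mul (ne_of_gt hx) (ne_of_gt hy)
  have hsub := hIR_subadd (-Real.logb 2 x) (-Real.logb 2 y)
    (neg_logb_nonneg hx hx1) (neg_logb_nonneg hy hy1)
  have harg : -Real.logb 2 (x * y) = -Real.logb 2 x + -Real.logb 2 y := by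
    rw [hlog]; ring
  rw [harg]
  calc x * y * hIR (-Real.logb 2 x + -Real.logb 2 y)
      ≤ x * y * (hIR (-Real.logb 2 x) + hIR (-Real.logb 2 y)) := by
        gcongr
    _ = x * (y * hIR (-Real.logb 2 y)) + y * (x * hIR (-Real.logb 2 x)) := by ring

lemma neg_logb_tendsto : Tendsto (fun x : ℝ => -Real.logb 2 x) (nhdsWithin 0 (Set.Ioi 0)) atTop :=
  tendsto_neg_atBot_atTop.comp (Real.tendsto_logb_nhdsGT_zero one_lt_two)

lemma mem_Ioo_eventually : ∀ᶠ x in nhdsWithin (0:ℝ) (Set.Ioi 0), x ∈ Set.Ioo (0:ℝ) 1 :=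
  Ioo_mem_nhdsGT (by norm_num)

lemma gIR_tendsto_zero : Tendsto gIR (nhdsWithin 0 (Set.Ioi 0)) (nhds 0) := by
  have hshannon : Tendsto shannonF (nhdsWithin 0 (Set.Ioi 0)) (nhds 0) := by
    have hcont : Continuous (fun x : ℝ => (Real.log 2)⁻¹ * Real.negMulLog x) :=
      continuous_const.mul Real.continuous_negMulLog
    have h0 : Tendsto (fun x : ℝ => (Real.log 2)⁻¹ * Real.negMulLog x) (nhds 0) (nhds 0) := by
      have := hcont.tendsto 0
      simpa using this
    refine (h0.mono_left nhdsWithin_le_nhds).congr ?_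
    intro x
    simp only [shannonF, Real.negMulLog, Real.logb]
    field_simp
  refine tendsto_of_tendsto_of_tendsto_of_le_of_le' tendsto_const_nhds hshannon ?_ ?_
  · filter_upwards [mem_Ioo_eventually] with x hx
    exact gIR_nonneg hx.1.le hx.2.le
  · filter_upwards [mem_Ioo_eventually] with x hx
    rw [gIR_of_pos hx.1, shannonF_eq]
    have hw : 0 ≤ -Real.logb 2 x := neg_logb_nonneg hx.1 hx.2.le
    have := hIR_le_aIR 0 hw
    simp only [aIR, pow_zero, div_one] at this
    have : hIR (-Real.logb 2 x) ≤ -Real.logb 2 x := by linarith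
    gcongr
    exact hx.1.le

lemma gIR_div_shannon_tendsto :
    Tendsto (fun x => gIR x / shannonF x) (nhdsWithin 0 (Set.Ioi 0)) (nhds 0) := by
  have hcomp : Tendsto (fun x : ℝ => hIR (-Real.logb 2 x) / (-Real.logb 2 x))
      (nhdsWithin 0 (Set.Ioi 0)) (nhds 0) :=
    hIR_div_tendsto_zero.comp neg_logb_tendsto
  refine hcomp.congr' ?_
  filter_upwards [mem_Ioo_eventually] with x hx
  have hxne : x ≠ 0 := ne_of_gt hx.1
  rw [gIR_of_pos hx.1, shannonF_eq, mul_div_mul_left _ _ hxne]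

lemma gIR_div_tendsto_atTop :
    Tendsto (fun x => gIR x / x) (nhdsWithin 0 (Set.Ioi 0)) atTop := by
  have hcomp : Tendsto (fun x : ℝ => hIR (-Real.logb 2 x)) (nhdsWithin 0 (Set.Ioi 0)) atTop :=
    hIR_tendsto_atTop.comp neg_logb_tendsto
  refine hcomp.congr' ?_
  filter_upwards [mem_Ioo_eventually] with x hx
  rw [gIR_of_pos hx.1, mul_comm, mul_div_assoc, div_self (ne_of_gt hx.1), mul_one]

/-- Properties of the Iksanov–Rösler function `h` and of `g(x) = x·h(−log₂ x)`:
(i) `h` is concave, subadditive, nondecreasing on `[0,∞)`, `h(x) → ∞` and `h(x)/x → 0`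
as `x → ∞`; (ii) `g` is concave on `[0,1]` with `g(0) = lim_{x→0⁺} g(x) = 0`,
subderivative, `lim_{x→0⁺} g(x)/η(x) = 0` and `lim_{x→0⁺} g(x)/x = ∞`. -/
theorem statement19 :
    ConcaveOn ℝ (Set.Ici 0) hIR ∧
    (∀ x y : ℝ, 0 ≤ x → 0 ≤ y → hIR (x + y) ≤ hIR x + hIR y) ∧
    MonotoneOn hIR (Set.Ici 0) ∧
    Tendsto hIR atTop atTop ∧
    Tendsto (fun x => hIR x / x) atTop (nhds 0) ∧
    ConcaveOn ℝ (Set.Icc 0 1) gIR ∧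
    gIR 0 = 0 ∧
    Tendsto gIR (nhdsWithin 0 (Set.Ioi 0)) (nhds 0) ∧
    (∀ x ∈ Set.Icc (0 : ℝ) 1, ∀ y ∈ Set.Icc (0 : ℝ) 1,
      gIR (x * y) ≤ x * gIR y + y * gIR x) ∧
    Tendsto (fun x => gIR x / shannonF x) (nhdsWithin 0 (Set.Ioi 0)) (nhds 0) ∧
    Tendsto (fun x => gIR x / x) (nhdsWithin 0 (Set.Ioi 0)) atTop := by
  exact ⟨hIR_concave, hIR_subadd, hIR_monotone, hIR_tendsto_atTop, hIR_div_tendsto_zero,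
    gIR_concave, gIR_zero, gIR_tendsto_zero, gIR_subderiv, gIR_div_shannon_tendsto,
    gIR_div_tendsto_atTop⟩
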